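/- Let n ≥ 3 and define, for r > 0 and either choice of sign, E_±(r) = ∫₀^∞ e^{−ry} y^{(n-4)/2} [(y ± 2i)^{(n-4)/2} − (±2i)^{(n-4)/2}] dy, with principal-branch complex powers. Then there is a constant C depending only on n such that |E_±(r)| ≤ C r^{−n/2} for all r ≥ 1. -/

import Mathlib

open MeasureTheory Complex
open scoped ENNReal RealInnerProductSpace

noncomputable section

/-- The frequency space `ℝ^{n-1}`, on which functions on the paraboloid
`S = {(τ,ξ) : τ = |ξ|²}` are parametrized (via `ξ ↦ (|ξ|², ξ)`). -/
abbrev Spc (n : ℕ) := EuclideanSpace ℝ (Fin (n - 1))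

/-- A dyadic number, an element of `2^ℤ`. -/
def IsDyadic (R : ℝ) : Prop := ∃ k : ℤ, R = 2 ^ k

/-- Membership in the class `𝓛_M` : cylindrically symmetric functions on the paraboloid
supported where `M ≤ |ξ| ≤ 2M`. -/
def CylSupported (n : ℕ) (M : ℝ) (f : Spc n → ℂ) : Prop :=
  (∀ ξ η : Spc n, ‖ξ‖ = ‖η‖ → f ξ = f η) ∧
  ∀ ξ : Spc n, f ξ ≠ 0 → M ≤ ‖ξ‖ ∧ ‖ξ‖ ≤ 2 * M

/-- The adjoint restriction (extension) operator for the paraboloid: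
`(f dσ)^∨(t,x) = ∫ f(|ξ|²,ξ) e^{i(x·ξ + t|ξ|²)} dξ`. -/
def parabExt (n : ℕ) (f : Spc n → ℂ) : ℝ × Spc n → ℂ :=
  fun p => ∫ ξ : Spc n, f ξ * Complex.exp (Complex.I * ((⟪p.2, ξ⟫ + p.1 * ‖ξ‖ ^ 2 : ℝ) : ℂ))

/-- The space-time slab `ℝ × A_R` with `A_R = {x : R/2 ≤ |x| ≤ R}`. -/
def annulus (n : ℕ) (R : ℝ) : Set (ℝ × Spc n) := {p | R / 2 ≤ ‖p.2‖ ∧ ‖p.2‖ ≤ R}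


lemma stmt16_aux (n : ℕ) (hn : 3 ≤ n) :
    ∃ C : ℝ, 0 < C ∧ ∀ c : ℂ, c.re = 0 → |c.im| = 2 → ∀ r : ℝ, 1 ≤ r →
      ‖∫ y in Set.Ioi (0 : ℝ),
          Complex.exp (-(Complex.ofReal (r * y))) * (y : ℂ) ^ (((n : ℂ) - 4) / 2) *
            (((y : ℂ) + c) ^ (((n : ℂ) - 4) / 2) - c ^ (((n : ℂ) - 4) / 2))‖
        ≤ C * r ^ (-(n : ℝ) / 2) := by
  set α : ℝ := ((n : ℝ) - 4) / 2 with hα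
  have hcast : (((n : ℂ) - 4) / 2) = ((α : ℝ) : ℂ) := by
    simp only [hα]; push_cast; ring
  set β : ℝ := max (α - 1) 0 with hβ
  have hβ0 : (0:ℝ) ≤ β := le_max_right _ _
  set K : ℝ := |α| * ((2:ℝ) ^ (α - 1) * (2:ℝ) ^ β) with hK
  have hK0 : 0 ≤ K := by positivity
  have hn3 : (3:ℝ) ≤ (n:ℝ) := by exact_mod_cast hn
  have hs₁ : (0:ℝ) < α + 2 := by rw [hα]; linarith
  have hs₂ : (0:ℝ) < α + 2 + β := by linarith
  have hΓ1 := Real.Gamma_pos_of_pos hs₁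
  have hΓ2 := Real.Gamma_pos_of_pos hs₂
  refine ⟨K * (Real.Gamma (α + 2) + Real.Gamma (α + 2 + β)) + 1, by nlinarith, ?_⟩
  intro c hcre hcim r hr
  have hr0 : (0:ℝ) < r := lt_of_lt_of_le one_pos hr
  have hcim0 : c.im ≠ 0 := by
    intro h; rw [h] at hcim; norm_num at hcim
  have habsc : ‖c‖ = 2 := by
    have h1 := Complex.sq_norm c
    rw [Complex.normSq_apply, hcre] at h1
    have h2 : c.im ^ 2 = 4 := by
      have := _root_.sq_abs c.im
      nlinarith
    nlinarith [norm_nonneg c]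
  rw [hcast]
  -- pointwise MVT bound for the cpow difference
  have hdiff : ∀ y : ℝ, 0 < y →
      ‖((y:ℂ) + c) ^ ((α : ℝ) : ℂ) - c ^ ((α : ℝ) : ℂ)‖
        ≤ |α| * ((2:ℝ) ^ (α - 1) * (1 + y) ^ β) * y := by
    intro y hy
    have h1y : (0:ℝ) < 1 + y := by linarith
    have key : ∀ t ∈ Set.Icc (0:ℝ) y,
        HasDerivWithinAt (fun t : ℝ => ((t:ℂ) + c) ^ ((α : ℝ) : ℂ))
          ((fun t : ℝ => ((α : ℝ) : ℂ) * ((t:ℂ) + c) ^ (((α : ℝ) : ℂ) - 1)) t)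
          (Set.Icc 0 y) t := by
      intro t ht
      have hslit : ((t:ℂ) + c) ∈ Complex.slitPlane := by
        rw [Complex.mem_slitPlane_iff]
        right; simpa using hcim0
      have h1 : HasDerivAt (fun z : ℂ => (z + c) ^ ((α : ℝ) : ℂ))
          (((α : ℝ) : ℂ) * ((t:ℂ) + c) ^ (((α : ℝ) : ℂ) - 1) * 1) ((t : ℝ) : ℂ) :=
        HasDerivAt.cpow_const ((hasDerivAt_id _).add_const c) hslit
      have h2 := h1.comp_ofReal
      simpa using h2.hasDerivWithinAt
    have bound : ∀ t ∈ Set.Icc (0:ℝ) y,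
        ‖((α : ℝ) : ℂ) * ((t:ℂ) + c) ^ (((α : ℝ) : ℂ) - 1)‖
          ≤ |α| * ((2:ℝ) ^ (α - 1) * (1 + y) ^ β) := by
      intro t ht
      have ht0 : (0:ℝ) ≤ t := ht.1
      have hge : (2:ℝ) ≤ ‖(t:ℂ) + c‖ := by
        have h := Complex.abs_im_le_norm ((t:ℂ) + c)
        simpa [hcim] using h
      have hle : ‖(t:ℂ) + c‖ ≤ 2 * (1 + y) := by
        calc ‖(t:ℂ) + c‖ ≤ ‖(t:ℂ)‖ + ‖c‖ :=
              norm_add_le _ _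
        _ = |t| + 2 := by rw [habsc, Complex.norm_real, Real.norm_eq_abs]
        _ ≤ 2 * (1 + y) := by rw [_root_.abs_of_nonneg ht0]; linarith [ht.2]
      have hab : ‖(t:ℂ) + c‖ ^ (α - 1) ≤ (2:ℝ) ^ (α - 1) * (1 + y) ^ β := by
        rcases le_or_gt (α - 1) 0 with hneg | hpos
        · calc ‖(t:ℂ) + c‖ ^ (α - 1) ≤ (2:ℝ) ^ (α - 1) :=
              Real.rpow_le_rpow_of_nonpos two_pos hge hneg
          _ ≤ (2:ℝ) ^ (α - 1) * (1 + y) ^ β := by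
              nlinarith [Real.one_le_rpow (by linarith : (1:ℝ) ≤ 1 + y) hβ0,
                Real.rpow_nonneg (by norm_num : (0:ℝ) ≤ 2) (α - 1)]
        · have hβeq : β = α - 1 := max_eq_left hpos.le
          calc ‖(t:ℂ) + c‖ ^ (α - 1)
              ≤ (2 * (1 + y)) ^ (α - 1) :=
                Real.rpow_le_rpow (norm_nonneg _) hle hpos.le
          _ = (2:ℝ) ^ (α - 1) * (1 + y) ^ (α - 1) := Real.mul_rpow (by norm_num) h1y.le
          _ = (2:ℝ) ^ (α - 1) * (1 + y) ^ β := by rw [hβeq]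
      calc ‖((α : ℝ) : ℂ) * ((t:ℂ) + c) ^ (((α : ℝ) : ℂ) - 1)‖
          = |α| * ‖(t:ℂ) + c‖ ^ (α - 1) := by
            rw [norm_mul, Complex.norm_real, Real.norm_eq_abs]
            congr 1
            have he : (((α : ℝ) : ℂ) - 1) = (((α - 1 : ℝ)) : ℂ) := by push_cast; ring
            rw [he, Complex.norm_cpow_real]
      _ ≤ |α| * ((2:ℝ) ^ (α - 1) * (1 + y) ^ β) :=
            mul_le_mul_of_nonneg_left hab (abs_nonneg α)
    have := (convex_Icc (0:ℝ) y).norm_image_sub_le_of_norm_hasDerivWithin_le key bound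
      (Set.left_mem_Icc.2 hy.le) (Set.right_mem_Icc.2 hy.le)
    simpa [Real.norm_eq_abs, _root_.abs_of_nonneg hy.le] using this
  -- integrability of the dominating function
  have hint1 : IntegrableOn (fun y : ℝ => y ^ (α + 1) * Real.exp (-(r * y))) (Set.Ioi 0) := by
    have h := integrableOn_rpow_mul_exp_neg_mul_rpow
      (p := 1) (s := α + 1) (b := r) (by linarith) one_pos hr0
    simpa [Real.rpow_one, neg_mul] using h
  have hint2 : IntegrableOn (fun y : ℝ => y ^ (α + 1 + β) * Real.exp (-(r * y))) (Set.Ioi 0) := by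
    have h := integrableOn_rpow_mul_exp_neg_mul_rpow
      (p := 1) (s := α + 1 + β) (b := r) (by linarith) one_pos hr0
    simpa [Real.rpow_one, neg_mul] using h
  have hIg : IntegrableOn (fun y : ℝ => K * (y ^ (α + 1) * Real.exp (-(r * y)) +
      y ^ (α + 1 + β) * Real.exp (-(r * y)))) (Set.Ioi 0) := (hint1.add hint2).const_mul K
  -- pointwise bound of the integrand
  have hpt : ∀ y : ℝ, y ∈ Set.Ioi (0:ℝ) →
      ‖Complex.exp (-(Complex.ofReal (r * y))) * (y : ℂ) ^ ((α : ℝ) : ℂ) *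
          (((y : ℂ) + c) ^ ((α : ℝ) : ℂ) - c ^ ((α : ℝ) : ℂ))‖
        ≤ K * (y ^ (α + 1) * Real.exp (-(r * y)) + y ^ (α + 1 + β) * Real.exp (-(r * y))) := by
    intro y hy
    rw [Set.mem_Ioi] at hy
    have he : ‖Complex.exp (-(Complex.ofReal (r * y)))‖ = Real.exp (-(r * y)) := by
      rw [Complex.norm_exp]; simp
    have hyp : ‖(y : ℂ) ^ ((α : ℝ) : ℂ)‖ = y ^ α := by
      rw [Complex.norm_cpow_real, Complex.norm_real, Real.norm_eq_abs, _root_.abs_of_nonneg hy.le]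
    have hy1 : y ^ α * y = y ^ (α + 1) := (Real.rpow_add_one hy.ne' α).symm
    have hcase : y ^ (α + 1) * (1 + y) ^ β ≤ (2:ℝ) ^ β * (y ^ (α + 1) + y ^ (α + 1 + β)) := by
      have h2β : (0:ℝ) ≤ (2:ℝ) ^ β := Real.rpow_nonneg (by norm_num) β
      rcases le_total y 1 with h1 | h1
      · have h2 : (1 + y) ^ β ≤ (2:ℝ) ^ β :=
          Real.rpow_le_rpow (by linarith) (by linarith) hβ0
        calc y ^ (α + 1) * (1 + y) ^ β
            ≤ y ^ (α + 1) * (2:ℝ) ^ β :=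
              mul_le_mul_of_nonneg_left h2 (Real.rpow_nonneg hy.le _)
        _ = (2:ℝ) ^ β * y ^ (α + 1) := mul_comm _ _
        _ ≤ (2:ℝ) ^ β * y ^ (α + 1) + (2:ℝ) ^ β * y ^ (α + 1 + β) :=
              le_add_of_nonneg_right (mul_nonneg h2β (Real.rpow_nonneg hy.le _))
        _ = (2:ℝ) ^ β * (y ^ (α + 1) + y ^ (α + 1 + β)) := (mul_add _ _ _).symm
      · have h2 : (1 + y) ^ β ≤ (2 * y) ^ β :=
          Real.rpow_le_rpow (by linarith) (by linarith) hβ0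
        have h3 : (2 * y) ^ β = (2:ℝ) ^ β * y ^ β := Real.mul_rpow (by norm_num) (by linarith)
        have h4 : y ^ (α + 1) * y ^ β = y ^ (α + 1 + β) := (Real.rpow_add hy _ _).symm
        calc y ^ (α + 1) * (1 + y) ^ β
            ≤ y ^ (α + 1) * (2 * y) ^ β :=
              mul_le_mul_of_nonneg_left h2 (Real.rpow_nonneg hy.le _)
        _ = (2:ℝ) ^ β * y ^ (α + 1 + β) := by rw [h3, ← h4]; ring
        _ ≤ (2:ℝ) ^ β * y ^ (α + 1) + (2:ℝ) ^ β * y ^ (α + 1 + β) :=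
              le_add_of_nonneg_left (mul_nonneg h2β (Real.rpow_nonneg hy.le _))
        _ = (2:ℝ) ^ β * (y ^ (α + 1) + y ^ (α + 1 + β)) := (mul_add _ _ _).symm
    calc ‖Complex.exp (-(Complex.ofReal (r * y))) * (y : ℂ) ^ ((α : ℝ) : ℂ) *
          (((y : ℂ) + c) ^ ((α : ℝ) : ℂ) - c ^ ((α : ℝ) : ℂ))‖
        = Real.exp (-(r * y)) * y ^ α *
            ‖((y : ℂ) + c) ^ ((α : ℝ) : ℂ) - c ^ ((α : ℝ) : ℂ)‖ := by
          rw [norm_mul, norm_mul, he, hyp]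
    _ ≤ Real.exp (-(r * y)) * y ^ α * (|α| * ((2:ℝ) ^ (α - 1) * (1 + y) ^ β) * y) := by
          refine mul_le_mul_of_nonneg_left (hdiff y hy) ?_
          positivity
    _ = (|α| * (2:ℝ) ^ (α - 1)) * (y ^ (α + 1) * (1 + y) ^ β) * Real.exp (-(r * y)) := by
          rw [← hy1]; ring
    _ ≤ (|α| * (2:ℝ) ^ (α - 1)) * ((2:ℝ) ^ β * (y ^ (α + 1) + y ^ (α + 1 + β))) *
          Real.exp (-(r * y)) := by
          refine mul_le_mul_of_nonneg_right (mul_le_mul_of_nonneg_left hcase ?_)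
            (Real.exp_nonneg _)
          positivity
    _ = K * (y ^ (α + 1) * Real.exp (-(r * y)) + y ^ (α + 1 + β) * Real.exp (-(r * y))) := by
          rw [hK]; ring
  have hnorm := MeasureTheory.norm_integral_le_of_norm_le hIg
    ((ae_restrict_iff' measurableSet_Ioi).2 (Filter.Eventually.of_forall hpt))
  -- compute the integral of the dominating function
  have hval1 : ∫ y in Set.Ioi (0:ℝ), y ^ (α + 1) * Real.exp (-(r * y))
      = (1 / r) ^ (α + 2) * Real.Gamma (α + 2) := by
    have h := Real.integral_rpow_mul_exp_neg_mul_Ioi hs₁ hr0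
    simpa [show α + 2 - 1 = α + 1 by ring] using h
  have hval2 : ∫ y in Set.Ioi (0:ℝ), y ^ (α + 1 + β) * Real.exp (-(r * y))
      = (1 / r) ^ (α + 2 + β) * Real.Gamma (α + 2 + β) := by
    have h := Real.integral_rpow_mul_exp_neg_mul_Ioi hs₂ hr0
    simpa [show α + 2 + β - 1 = α + 1 + β by ring] using h
  have hIval : ∫ y in Set.Ioi (0:ℝ), K * (y ^ (α + 1) * Real.exp (-(r * y)) +
      y ^ (α + 1 + β) * Real.exp (-(r * y)))
      = K * ((1 / r) ^ (α + 2) * Real.Gamma (α + 2) +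
          (1 / r) ^ (α + 2 + β) * Real.Gamma (α + 2 + β)) := by
    rw [MeasureTheory.integral_const_mul, MeasureTheory.integral_add hint1 hint2, hval1, hval2]
  have h1r : (1 / r) ^ (α + 2) = r ^ (-(n : ℝ) / 2) := by
    have he : -(α + 2) = -(n : ℝ) / 2 := by rw [hα]; ring
    rw [one_div, Real.inv_rpow hr0.le, ← Real.rpow_neg hr0.le, he]
  have h2r : (1 / r) ^ (α + 2 + β) ≤ r ^ (-(n : ℝ) / 2) := by
    rw [one_div, Real.inv_rpow hr0.le, ← Real.rpow_neg hr0.le]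
    refine Real.rpow_le_rpow_of_exponent_le hr ?_
    rw [hα]; linarith
  have hrp : (0:ℝ) ≤ r ^ (-(n : ℝ) / 2) := Real.rpow_nonneg hr0.le _
  calc ‖∫ y in Set.Ioi (0:ℝ), Complex.exp (-(Complex.ofReal (r * y))) *
        (y : ℂ) ^ ((α : ℝ) : ℂ) * (((y : ℂ) + c) ^ ((α : ℝ) : ℂ) - c ^ ((α : ℝ) : ℂ))‖
      ≤ ∫ y in Set.Ioi (0:ℝ), K * (y ^ (α + 1) * Real.exp (-(r * y)) +
          y ^ (α + 1 + β) * Real.exp (-(r * y))) := hnorm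
  _ = K * ((1 / r) ^ (α + 2) * Real.Gamma (α + 2) +
        (1 / r) ^ (α + 2 + β) * Real.Gamma (α + 2 + β)) := hIval
  _ ≤ (K * (Real.Gamma (α + 2) + Real.Gamma (α + 2 + β)) + 1) * r ^ (-(n : ℝ) / 2) := by
      rw [h1r]
      calc K * (r ^ (-(n : ℝ) / 2) * Real.Gamma (α + 2) +
            (1 / r) ^ (α + 2 + β) * Real.Gamma (α + 2 + β))
          ≤ K * (r ^ (-(n : ℝ) / 2) * Real.Gamma (α + 2) +
            r ^ (-(n : ℝ) / 2) * Real.Gamma (α + 2 + β)) := by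
            refine mul_le_mul_of_nonneg_left (add_le_add le_rfl ?_) hK0
            exact mul_le_mul_of_nonneg_right h2r hΓ2.le
      _ = K * (Real.Gamma (α + 2) + Real.Gamma (α + 2 + β)) * r ^ (-(n : ℝ) / 2) := by ring
      _ ≤ (K * (Real.Gamma (α + 2) + Real.Gamma (α + 2 + β)) + 1) * r ^ (-(n : ℝ) / 2) :=
            mul_le_mul_of_nonneg_right (by linarith) hrp

/-- the Bessel-expansion error integrals
`E_±(r) = ∫₀^∞ e^{-ry} y^{(n-4)/2} [(y ± 2i)^{(n-4)/2} − (±2i)^{(n-4)/2}] dy`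
satisfy `|E_±(r)| ≤ C r^{-n/2}` for all `r ≥ 1`, with `C` depending only on `n`. -/
theorem stmt16 (n : ℕ) (hn : 3 ≤ n) :
    ∃ C : ℝ, 0 < C ∧ ∀ r : ℝ, 1 ≤ r →
      ‖∫ y in Set.Ioi (0 : ℝ),
          Complex.exp (-(Complex.ofReal (r * y))) * (y : ℂ) ^ (((n : ℂ) - 4) / 2) *
            (((y : ℂ) + 2 * Complex.I) ^ (((n : ℂ) - 4) / 2) -
              (2 * Complex.I) ^ (((n : ℂ) - 4) / 2))‖ ≤ C * r ^ (-(n : ℝ) / 2) ∧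
      ‖∫ y in Set.Ioi (0 : ℝ),
          Complex.exp (-(Complex.ofReal (r * y))) * (y : ℂ) ^ (((n : ℂ) - 4) / 2) *
            (((y : ℂ) - 2 * Complex.I) ^ (((n : ℂ) - 4) / 2) -
              (-(2 * Complex.I)) ^ (((n : ℂ) - 4) / 2))‖ ≤ C * r ^ (-(n : ℝ) / 2) := by
  obtain ⟨C, hC, h⟩ := stmt16_aux n hn
  refine ⟨C, hC, fun r hr => ⟨?_, ?_⟩⟩
  · exact h (2 * Complex.I) (by simp) (by norm_num) r hr
  · have := h (-(2 * Complex.I)) (by simp) (by norm_num) r hr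
    simpa only [sub_eq_add_neg] using this
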